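/- Let p: T → W be a birational morphism of smooth projective surfaces, a composition of s blow-ups, and let Δ_1, ..., Δ_k be disjoint A-D-E configurations of type A_{m_1}, ..., A_{m_k} all contracted by p. Then Σ_{i=1}^k (m_i + 1) ≤ s. In particular, the number k of disjoint irreducible -2-curves contracted by p satisfies 2k ≤ s. -/

import Mathlib

/-- An abstract smooth complex projective surface: its group of divisors with
intersection pairing, canonical divisor, effective cone, irreducible curves,
arithmetic genus (satisfying adjunction), and cohomology dimensions
`h⁰(D, O_D)`, `h¹(D, O_D)`, `h⁰(D, ω_D)`. -/
structure Surface where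
  Div : Type
  grp : AddCommGroup Div
  inter : Div → Div → ℤ
  inter_comm : ∀ A B, inter A B = inter B A
  inter_add_left : ∀ A B C, inter (A + B) C = inter A C + inter B C
  K : Div
  Eff : Div → Prop
  eff_zero : Eff 0
  eff_add : ∀ {A B}, Eff A → Eff B → Eff (A + B)
  Irr : Div → Prop
  irr_curve : ∀ {A}, Irr A → Eff A ∧ A ≠ 0
  pa : Div → ℤ
  adjunction : ∀ D, 2 * pa D - 2 = inter K D + inter D D
  h0O : Div → ℕ
  h1O : Div → ℕ
  h0ω : Div → ℕ
  pa_def : ∀ D, (1 : ℤ) - pa D = (h0O D : ℤ) - (h1O D : ℤ)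
  serre : ∀ D, h0ω D = h1O D

attribute [instance] Surface.grp

/-- A curve is a nonzero effective divisor. -/
def Surface.Curve (S : Surface) (D : S.Div) : Prop := S.Eff D ∧ D ≠ 0

/-- `D` is 1-connected: it is a curve and every decomposition `D = A + B`
into curves satisfies `A·B ≥ 1`. -/
def Surface.OneConnected (S : Surface) (D : S.Div) : Prop :=
  S.Curve D ∧ ∀ A B : S.Div, S.Curve A → S.Curve B → A + B = D → 1 ≤ S.inter A B

/-- The data of a birational morphism `p : T → W` of smooth projective surfaces,
a composition of `s` blow-ups, recorded on the source surface `S = T`: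
the total exceptional divisors `E 1, …, E s` (total transforms of the exceptional
curves of the blow-ups), the pullback `pK = p*K_W` of the canonical divisor of `W`,
and the predicate `Exc` of being supported on the `p`-exceptional locus
(i.e. contracted by `p` to a finite set of points). -/
structure Blowdown (S : Surface) (s : ℕ) where
  E : Fin s → S.Div
  pK : S.Div
  Exc : S.Div → Prop
  exc_zero : Exc 0
  exc_sub : ∀ {A B}, Exc A → Exc B → Exc (A - B)
  exc_E : ∀ i, Exc (E i)
  exc_comp : ∀ {D Γ}, Exc D → S.Eff D → S.Irr Γ → S.Eff (D - Γ) → Exc Γ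
  E_curve : ∀ i, S.Curve (E i)
  K_eq : S.K = pK + ∑ i, E i
  pK_exc : ∀ {D}, Exc D → S.inter pK D = 0
  EE : ∀ i j, S.inter (E i) (E j) = if i = j then -1 else 0
  negdef : ∀ {D}, Exc D → D ≠ 0 → S.inter D D < 0
  exc_span : ∀ {D}, Exc D → (∀ i, S.inter D (E i) = 0) → D = 0

/-- The dual graph of a configuration of irreducible curves `C i`: vertices are the
curves, and two distinct curves are adjacent when they meet (intersection number 1). -/
def configGraph (S : Surface) {n : ℕ} (C : Fin n → S.Div) : SimpleGraph (Fin n) where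
  Adj i j := i ≠ j ∧ S.inter (C i) (C j) = 1
  symm := ⟨fun i j hij => ⟨hij.1.symm, by rw [S.inter_comm]; exact hij.2⟩⟩
  loopless := ⟨fun i hi => hi.1 rfl⟩

/-- An A-D-E configuration on `S`: a reduced divisor `∑ C i` whose components `C i`
are distinct `-2`-curves (irreducible, `C i² = -2`, `K·C i = 0`), meeting pairwise
transversally in at most one point, whose dual graph is a tree (connected and acyclic)
and whose intersection matrix is negative definite; these conditions characterize the
configurations whose dual graph is a Dynkin diagram of type Aₙ, Dₙ or Eₙ. -/
structure ADEConfig (S : Surface) where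
  n : ℕ
  npos : 0 < n
  C : Fin n → S.Div
  irr : ∀ i, S.Irr (C i)
  inj : Function.Injective C
  sq : ∀ i, S.inter (C i) (C i) = -2
  KC : ∀ i, S.inter S.K (C i) = 0
  int01 : ∀ i j, i ≠ j → S.inter (C i) (C j) = 0 ∨ S.inter (C i) (C j) = 1
  tree : (configGraph S C).IsTree
  negdef : ∀ a : Fin n → ℤ, a ≠ 0 → ∑ i, ∑ j, a i * a j * S.inter (C i) (C j) < 0

/-- The configuration is of type `Aₙ`: its dual graph is a path. -/
def ADEConfig.IsTypeA {S : Surface} (Δ : ADEConfig S) : Prop :=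
  ∃ e : Fin Δ.n ≃ Fin Δ.n, ∀ i j : Fin Δ.n,
    (configGraph S Δ.C).Adj (e i) (e j) ↔ ((i : ℕ) + 1 = (j : ℕ) ∨ (j : ℕ) + 1 = (i : ℕ))

/-! ### Auxiliary lemmas -/

section Aux

variable {S : Surface} {s : ℕ} (B : Blowdown S s)

lemma Surface.inter_zero_left (A : S.Div) : S.inter 0 A = 0 := by
  have := S.inter_add_left 0 0 A
  rw [add_zero] at this; omega

lemma Surface.inter_sub_left (A C D : S.Div) :
    S.inter (A - C) D = S.inter A D - S.inter C D := by
  have := S.inter_add_left (A - C) C D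
  rw [sub_add_cancel] at this; omega

lemma Surface.inter_neg_left (A D : S.Div) : S.inter (-A) D = -S.inter A D := by
  have := S.inter_sub_left 0 A D
  rwa [zero_sub, S.inter_zero_left, zero_sub] at this

lemma Surface.inter_zsmul_left (z : ℤ) (A D : S.Div) :
    S.inter (z • A) D = z * S.inter A D := by
  induction z using Int.induction_on with
  | zero => simp [S.inter_zero_left]
  | succ n ih =>
      have : ((n : ℤ) + 1) • A = (n : ℤ) • A + A := by rw [add_smul, one_smul]
      rw [this, S.inter_add_left, ih]; ring
  | pred n ih =>
      have : (-(n : ℤ) - 1) • A = (-(n : ℤ)) • A - A := by rw [sub_smul, one_smul]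
      rw [this, S.inter_sub_left, ih]; ring

lemma Surface.inter_sum_left {ι : Type*} (t : Finset ι) (f : ι → S.Div) (D : S.Div) :
    S.inter (∑ i ∈ t, f i) D = ∑ i ∈ t, S.inter (f i) D := by
  induction t using Finset.cons_induction with
  | empty => simp [S.inter_zero_left]
  | cons a t ha ih => rw [Finset.sum_cons, S.inter_add_left, ih, Finset.sum_cons]

lemma Blowdown.exc_add {A C : S.Div} (hA : B.Exc A) (hC : B.Exc C) : B.Exc (A + C) := by
  have h : A + C = A - (0 - C) := by abel
  rw [h]; exact B.exc_sub hA (B.exc_sub B.exc_zero hC)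

lemma Blowdown.exc_zsmul (z : ℤ) {A : S.Div} (hA : B.Exc A) : B.Exc (z • A) := by
  induction z using Int.induction_on with
  | zero => simpa using B.exc_zero
  | succ n ih =>
      have : ((n : ℤ) + 1) • A = (n : ℤ) • A + A := by rw [add_smul, one_smul]
      rw [this]; exact B.exc_add ih hA
  | pred n ih =>
      have : (-(n : ℤ) - 1) • A = (-(n : ℤ)) • A - A := by rw [sub_smul, one_smul]
      rw [this]; exact B.exc_sub ih hA

lemma Blowdown.exc_sum {ι : Type*} (t : Finset ι) (f : ι → S.Div)
    (hf : ∀ i ∈ t, B.Exc (f i)) : B.Exc (∑ i ∈ t, f i) := by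
  induction t using Finset.cons_induction with
  | empty => simpa using B.exc_zero
  | cons a t ha ih =>
      rw [Finset.sum_cons]
      exact B.exc_add (hf a (Finset.mem_cons_self a t))
        (ih fun i hi => hf i (Finset.mem_cons_of_mem hi))

/-- Every exceptional divisor is an integral combination of the `E i`. -/
lemma Blowdown.repr {D : S.Div} (hD : B.Exc D) :
    D = ∑ i, (-(S.inter D (B.E i))) • B.E i := by
  set R := D - ∑ i, (-(S.inter D (B.E i))) • B.E i with hR
  have hexcR : B.Exc R :=
    B.exc_sub hD (B.exc_sum _ _ fun i _ => B.exc_zsmul _ (B.exc_E i))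
  have hzero : ∀ j, S.inter R (B.E j) = 0 := by
    intro j
    rw [hR, S.inter_sub_left, S.inter_sum_left]
    have : ∀ i : Fin s, S.inter ((-(S.inter D (B.E i))) • B.E i) (B.E j)
        = if i = j then S.inter D (B.E j) else 0 := by
      intro i
      rw [S.inter_zsmul_left, B.EE]
      by_cases h : i = j <;> simp [h] <;> ring
    rw [Finset.sum_congr rfl fun i _ => this i, Finset.sum_ite_eq' Finset.univ j]
    simp
  have := B.exc_span hexcR hzero
  rw [hR] at this
  have : D = ∑ i, (-(S.inter D (B.E i))) • B.E i := by
    have h := sub_eq_zero.mp this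
    exact h
  exact this

/-- The intersection form in exceptional coordinates. -/
lemma Blowdown.inter_eq {D D' : S.Div} (hD : B.Exc D) (hD' : B.Exc D') :
    S.inter D D' = -∑ i, S.inter D (B.E i) * S.inter D' (B.E i) := by
  conv_lhs => rw [B.repr hD]
  rw [S.inter_sum_left]
  have : ∀ i : Fin s, S.inter ((-(S.inter D (B.E i))) • B.E i) D'
      = -(S.inter D (B.E i) * S.inter D' (B.E i)) := by
    intro i
    rw [S.inter_zsmul_left, S.inter_comm (B.E i) D']
    ring
  rw [Finset.sum_congr rfl fun i _ => this i, ← Finset.sum_neg_distrib]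

/-- `∑ D·Eᵢ = K·D` for exceptional `D`. -/
lemma Blowdown.sum_coord {D : S.Div} (hD : B.Exc D) :
    ∑ i, S.inter D (B.E i) = S.inter S.K D := by
  rw [B.K_eq, S.inter_add_left, B.pK_exc hD, S.inter_sum_left, zero_add]
  exact Finset.sum_congr rfl fun i _ => S.inter_comm D (B.E i)

end Aux

section Comb

variable {α : Type*} [Fintype α] [DecidableEq α]

/-- A vector summing to 0 with square-sum 2 is a difference of two indicators. -/
lemma two_entries (f : α → ℤ) (h0 : ∑ t, f t = 0) (h2 : ∑ t, f t * f t = 2) :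
    ∃ i j, i ≠ j ∧ ∀ t, f t = (if t = i then 1 else 0) - (if t = j then 1 else 0) := by
  have hb : ∀ t, f t = -1 ∨ f t = 0 ∨ f t = 1 := by
    intro t
    have h1 : f t * f t ≤ 2 := by
      have h := Finset.single_le_sum (f := fun r => f r * f r)
        (fun i _ => mul_self_nonneg (f i)) (Finset.mem_univ t)
      omega
    have hl : -1 ≤ f t := by nlinarith
    have hr : f t ≤ 1 := by nlinarith
    omega
  classical
  set A := Finset.univ.filter (fun t => f t = 1) with hA
  set Bb := Finset.univ.filter (fun t => f t = -1) with hB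
  have hsum1 : ∑ t, f t = (A.card : ℤ) - (Bb.card : ℤ) := by
    have : ∀ t : α, f t = (if f t = 1 then (1:ℤ) else 0) - (if f t = -1 then 1 else 0) := by
      intro t; rcases hb t with h | h | h <;> simp [h]
    rw [Finset.sum_congr rfl fun t _ => this t, Finset.sum_sub_distrib,
      Finset.sum_boole, Finset.sum_boole]
  have hsum2 : ∑ t, f t * f t = (A.card : ℤ) + (Bb.card : ℤ) := by
    have : ∀ t : α, f t * f t
        = (if f t = 1 then (1:ℤ) else 0) + (if f t = -1 then 1 else 0) := by
      intro t; rcases hb t with h | h | h <;> simp [h]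
    rw [Finset.sum_congr rfl fun t _ => this t, Finset.sum_add_distrib,
      Finset.sum_boole, Finset.sum_boole]
  rw [h0] at hsum1
  rw [h2] at hsum2
  have hcardA : A.card = 1 := by omega
  have hcardB : Bb.card = 1 := by omega
  obtain ⟨i, hi⟩ := Finset.card_eq_one.mp hcardA
  obtain ⟨j, hj⟩ := Finset.card_eq_one.mp hcardB
  have hfi : f i = 1 := by
    have : i ∈ A := by rw [hi]; exact Finset.mem_singleton_self i
    simpa [hA] using this
  have hfj : f j = -1 := by
    have : j ∈ Bb := by rw [hj]; exact Finset.mem_singleton_self j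
    simpa [hB] using this
  refine ⟨i, j, fun h => by rw [h, hfj] at hfi; omega, fun t => ?_⟩
  by_cases hti : t = i
  · subst hti
    have hij : ¬ (t = j) := fun h => by rw [h, hfj] at hfi; omega
    simp [hfi, hij]
  · by_cases htj : t = j
    · subst htj
      simp [hfj, hti]
    · have h1 : f t ≠ 1 := by
        intro h
        have : t ∈ A := by simp [hA, h]
        rw [hi] at this
        exact hti (Finset.mem_singleton.mp this)
      have h2 : f t ≠ -1 := by
        intro h
        have : t ∈ Bb := by simp [hB, h]
        rw [hj] at this
        exact htj (Finset.mem_singleton.mp this)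
      have : f t = 0 := by rcases hb t with h | h | h <;> omega
      simp [this, hti, htj]

lemma dot_indicator (a b : α) :
    ∑ t : α, (if t = a then (1:ℤ) else 0) * (if t = b then 1 else 0)
      = if a = b then 1 else 0 := by
  have : ∀ t : α, (if t = a then (1:ℤ) else 0) * (if t = b then 1 else 0)
      = if t = a then (if a = b then (1:ℤ) else 0) else 0 := by
    intro t
    by_cases h : t = a
    · subst h; simp
    · simp [h]
  rw [Finset.sum_congr rfl fun t _ => this t, Finset.sum_ite_eq' Finset.univ a]
  simp

lemma dot_edge (i j k l : α) :
    ∑ t : α, ((if t = i then (1:ℤ) else 0) - (if t = j then 1 else 0)) *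
      ((if t = k then (1:ℤ) else 0) - (if t = l then 1 else 0))
    = ((if i = k then (1:ℤ) else 0) - (if i = l then 1 else 0))
      - ((if j = k then (1:ℤ) else 0) - (if j = l then 1 else 0)) := by
  have : ∀ t : α, ((if t = i then (1:ℤ) else 0) - (if t = j then 1 else 0)) *
      ((if t = k then (1:ℤ) else 0) - (if t = l then 1 else 0))
      = (if t = i then (1:ℤ) else 0) * (if t = k then 1 else 0)
        - (if t = i then (1:ℤ) else 0) * (if t = l then 1 else 0)
        - ((if t = j then (1:ℤ) else 0) * (if t = k then 1 else 0)
          - (if t = j then (1:ℤ) else 0) * (if t = l then 1 else 0)) := by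
    intro t; ring
  rw [Finset.sum_congr rfl fun t _ => this t, Finset.sum_sub_distrib,
    Finset.sum_sub_distrib, Finset.sum_sub_distrib,
    dot_indicator, dot_indicator, dot_indicator, dot_indicator]

/-- Orthogonal edges are vertex-disjoint. -/
lemma edge_orth {i j k l : α} (hij : i ≠ j) (hkl : k ≠ l)
    (h : ∑ t : α, ((if t = i then (1:ℤ) else 0) - (if t = j then 1 else 0)) *
      ((if t = k then (1:ℤ) else 0) - (if t = l then 1 else 0)) = 0) :
    i ≠ k ∧ i ≠ l ∧ j ≠ k ∧ j ≠ l := by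
  rw [dot_edge] at h
  by_cases h1 : i = k <;> by_cases h2 : i = l <;> by_cases h3 : j = k <;>
    by_cases h4 : j = l <;> simp_all <;> omega

/-- Edges with intersection pairing `-1` share exactly one vertex. -/
lemma edge_meet {i j k l : α} (hij : i ≠ j) (hkl : k ≠ l)
    (h : ∑ t : α, ((if t = i then (1:ℤ) else 0) - (if t = j then 1 else 0)) *
      ((if t = k then (1:ℤ) else 0) - (if t = l then 1 else 0)) = -1) :
    ∃ x, ({i, j} : Finset α) ∩ ({k, l} : Finset α) = {x} := by
  rw [dot_edge] at h
  have key : (i = l ∧ i ≠ k ∧ j ≠ k ∧ j ≠ l) ∨ (j = k ∧ i ≠ k ∧ i ≠ l ∧ j ≠ l) := by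
    by_cases h1 : i = k <;> by_cases h2 : i = l <;> by_cases h3 : j = k <;>
      by_cases h4 : j = l <;> simp_all <;> first | tauto | omega
  obtain ⟨hil, h1, h3, h4⟩ | ⟨hjk, h1, h2, h4⟩ := key
  · refine ⟨i, ?_⟩
    ext t
    simp only [Finset.mem_inter, Finset.mem_insert, Finset.mem_singleton]
    constructor
    · rintro ⟨h5 | h5, h6 | h6⟩ <;> subst h5 <;> tauto
    · rintro rfl
      exact ⟨Or.inl rfl, Or.inr hil⟩
  · refine ⟨j, ?_⟩
    ext t
    simp only [Finset.mem_inter, Finset.mem_insert, Finset.mem_singleton]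
    constructor
    · rintro ⟨h5 | h5, h6 | h6⟩ <;> subst h5 <;> tauto
    · rintro rfl
      exact ⟨Or.inr rfl, Or.inl hjk⟩

/-- Chain of edges: `n` edges, consecutive ones meeting in one point, distant ones
disjoint, cover at least `n+1` vertices. -/
lemma chain_count (n : ℕ) (hn : 0 < n) (ed : ℕ → Finset α)
    (hcard : ∀ b, b < n → (ed b).card = 2)
    (hcons : ∀ b, b + 1 < n → ∃ x, ed b ∩ ed (b + 1) = {x})
    (hfar : ∀ a b, a + 1 < b → b < n → Disjoint (ed a) (ed b)) :
    n + 1 ≤ ((Finset.range n).biUnion ed).card := by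
  have key : ∀ m, m < n → ((Finset.range (m + 1)).biUnion ed).card = m + 2 := by
    intro m
    induction m with
    | zero => intro h; simpa using hcard 0 h
    | succ m ih =>
        intro h
        have hm : m < n := Nat.lt_of_succ_lt h
        have hU := ih hm
        rw [Finset.range_add_one, Finset.biUnion_insert]
        have hint : ed (m + 1) ∩ (Finset.range (m + 1)).biUnion ed
            = ed m ∩ ed (m + 1) := by
          ext t
          simp only [Finset.mem_inter, Finset.mem_biUnion, Finset.mem_range]
          constructor
          · rintro ⟨ht1, b, hb, ht2⟩
            rcases Nat.lt_succ_iff_lt_or_eq.mp hb with hb' | rfl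
            · exact absurd ht1 (Finset.disjoint_left.mp
                (hfar b (m + 1) (by omega) h) ht2)
            · exact ⟨ht2, ht1⟩
          · rintro ⟨ht1, ht2⟩
            exact ⟨ht2, m, Nat.lt_succ_self m, ht1⟩
        obtain ⟨x, hx⟩ := hcons m h
        have hcardint : (ed (m + 1) ∩ (Finset.range (m + 1)).biUnion ed).card = 1 := by
          rw [hint, hx]; simp
        have := Finset.card_union_add_card_inter (ed (m + 1))
          ((Finset.range (m + 1)).biUnion ed)
        rw [hcardint, hU, hcard (m + 1) h] at this
        omega
  have h1 := key (n - 1) (by omega)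
  have h2 : n - 1 + 1 = n := by omega
  rw [h2] at h1
  omega

end Comb

section ConfigBound

variable {S : Surface} {s : ℕ}

/-- The coordinate vector of a `(-2)`-curve of a contracted configuration is a
difference of two indicators. -/
lemma curve_edge (B : Blowdown S s) {C : S.Div} (hexc : B.Exc C)
    (hsq : S.inter C C = -2) (hK : S.inter S.K C = 0) :
    ∃ i j : Fin s, i ≠ j ∧ ∀ t, S.inter C (B.E t)
      = (if t = i then 1 else 0) - (if t = j then 1 else 0) := by
  apply two_entries
  · rw [B.sum_coord hexc, hK]
  · have := B.inter_eq hexc hexc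
    omega

/-- Per-configuration bound: a contracted type-A configuration with `n` curves has
exceptional support of size at least `n+1`. -/
lemma config_bound (B : Blowdown S s) (Δ : ADEConfig S) (hA : Δ.IsTypeA)
    (hexc : ∀ a, B.Exc (Δ.C a)) :
    ∃ V : Finset (Fin s), Δ.n + 1 ≤ V.card ∧
      ∀ t ∈ V, ∃ a, S.inter (Δ.C a) (B.E t) ≠ 0 := by
  classical
  obtain ⟨e, he⟩ := hA
  have hedge : ∀ a : Fin Δ.n, ∃ i j : Fin s, i ≠ j ∧
      ∀ t, S.inter (Δ.C (e a)) (B.E t)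
      = (if t = i then 1 else 0) - (if t = j then 1 else 0) :=
    fun a => curve_edge B (hexc (e a)) (Δ.sq (e a)) (Δ.KC (e a))
  choose I J hIJ hform using hedge
  have hdot : ∀ a b : Fin Δ.n,
      ∑ t : Fin s, ((if t = I a then (1:ℤ) else 0) - (if t = J a then 1 else 0)) *
        ((if t = I b then (1:ℤ) else 0) - (if t = J b then 1 else 0))
      = -S.inter (Δ.C (e a)) (Δ.C (e b)) := by
    intro a b
    have h1 : ∀ t : Fin s,
        ((if t = I a then (1:ℤ) else 0) - (if t = J a then 1 else 0)) *
          ((if t = I b then (1:ℤ) else 0) - (if t = J b then 1 else 0))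
        = S.inter (Δ.C (e a)) (B.E t) * S.inter (Δ.C (e b)) (B.E t) := by
      intro t; rw [hform a t, hform b t]
    rw [Finset.sum_congr rfl fun t _ => h1 t]
    have := B.inter_eq (hexc (e a)) (hexc (e b))
    omega
  have hadj : ∀ a b : Fin Δ.n, (a : ℕ) + 1 = (b : ℕ) →
      S.inter (Δ.C (e a)) (Δ.C (e b)) = 1 := by
    intro a b hab
    exact (show _ ≠ _ ∧ _ from (he a b).mpr (Or.inl hab)).2
  have hnonadj : ∀ a b : Fin Δ.n, a ≠ b → ¬((a : ℕ) + 1 = (b : ℕ)) →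
      ¬((b : ℕ) + 1 = (a : ℕ)) → S.inter (Δ.C (e a)) (Δ.C (e b)) = 0 := by
    intro a b hab h1 h2
    have hne : e a ≠ e b := fun h => hab (e.injective h)
    rcases Δ.int01 (e a) (e b) hne with h | h
    · exact h
    · exact absurd ((he a b).mp (show _ ≠ _ ∧ _ from ⟨hne, h⟩)) (by tauto)
  set ed : ℕ → Finset (Fin s) :=
    fun b => if h : b < Δ.n then ({I ⟨b, h⟩, J ⟨b, h⟩} : Finset (Fin s)) else ∅ with hed
  refine ⟨(Finset.range Δ.n).biUnion ed, ?_, ?_⟩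
  · apply chain_count Δ.n Δ.npos ed
    · intro b hb
      rw [hed]; simp only [hb, dif_pos]
      exact Finset.card_pair (hIJ ⟨b, hb⟩)
    · intro b hb
      have hb' : b < Δ.n := by omega
      rw [hed]
      simp only [hb', hb, dif_pos]
      apply edge_meet (hIJ ⟨b, hb'⟩) (hIJ ⟨b + 1, hb⟩)
      rw [hdot ⟨b, hb'⟩ ⟨b + 1, hb⟩, hadj ⟨b, hb'⟩ ⟨b + 1, hb⟩ rfl]
    · intro a b hab hb
      have ha' : a < Δ.n := by omega
      rw [hed]
      simp only [ha', hb, dif_pos]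
      have h0 : S.inter (Δ.C (e ⟨a, ha'⟩)) (Δ.C (e ⟨b, hb⟩)) = 0 := by
        apply hnonadj <;> simp [Fin.ext_iff] <;> omega
      have h4 := edge_orth (hIJ ⟨a, ha'⟩) (hIJ ⟨b, hb⟩)
        (by rw [hdot ⟨a, ha'⟩ ⟨b, hb⟩, h0]; ring)
      rw [Finset.disjoint_left]
      intro t ht ht'
      simp only [Finset.mem_insert, Finset.mem_singleton] at ht ht'
      rcases ht with rfl | rfl <;> rcases ht' with h | h <;> tauto
  · intro t ht
    rw [Finset.mem_biUnion] at ht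
    obtain ⟨b, hb, htb⟩ := ht
    rw [Finset.mem_range] at hb
    rw [hed] at htb
    simp only [hb, dif_pos, Finset.mem_insert, Finset.mem_singleton] at htb
    refine ⟨e ⟨b, hb⟩, ?_⟩
    rw [hform ⟨b, hb⟩ t]
    rcases htb with rfl | rfl
    · simp [hIJ ⟨b, hb⟩]
    · simp [Ne.symm (hIJ ⟨b, hb⟩)]

end ConfigBound

/-- A single `(-2)`-curve as an `A₁`-configuration. -/
noncomputable def singleConfig (S : Surface) (N : S.Div) (hirr : S.Irr N)
    (hsq : S.inter N N = -2) (hK : S.inter S.K N = 0) : ADEConfig S where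
  n := 1
  npos := one_pos
  C := fun _ => N
  irr := fun _ => hirr
  inj := fun a b _ => Subsingleton.elim a b
  sq := fun _ => hsq
  KC := fun _ => hK
  int01 := fun i j hij => absurd (Subsingleton.elim i j) hij
  tree := by
    constructor
    · constructor
      intro u v
      rw [Subsingleton.elim u v]
    · intro v c hc
      cases c with
      | nil => exact hc.ne_nil rfl
      | cons h p => exact absurd (Subsingleton.elim _ _) (show _ ≠ _ ∧ _ from h).1
  negdef := by
    intro a ha
    have h0 : a 0 ≠ 0 := by
      intro h
      apply ha
      funext i
      rw [Subsingleton.elim i 0]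
      simp [h]
    simp only [Fin.sum_univ_one, hsq]
    nlinarith [mul_self_pos.mpr h0]

lemma singleConfig_typeA (S : Surface) (N : S.Div) (hirr : S.Irr N)
    (hsq : S.inter N N = -2) (hK : S.inter S.K N = 0) :
    (singleConfig S N hirr hsq hK).IsTypeA := by
  refine ⟨Equiv.refl _, fun i j => ?_⟩
  have hn : (singleConfig S N hirr hsq hK).n = 1 := rfl
  have hi : (i : ℕ) = 0 := by have := i.isLt; omega
  have hj : (j : ℕ) = 0 := by have := j.isLt; omega
  constructor
  · intro h
    exact absurd (Fin.ext (by omega : (i : ℕ) = (j : ℕ))) (show _ ≠ _ ∧ _ from h).1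
  · intro h
    rcases h with h | h <;> omega

/-- if `Δ₁, …, Δ_k` are disjoint A-D-E configurations of type
`A_{m₁}, …, A_{m_k}` all contracted by `p` (a composition of `s` blow-ups), then
`∑ (mᵢ + 1) ≤ s`. In particular, `k` disjoint irreducible `-2`-curves contracted
by `p` satisfy `2k ≤ s`. -/
theorem stmt17 (S : Surface) (s : ℕ) (B : Blowdown S s) :
    (∀ (k : ℕ) (Δ : Fin k → ADEConfig S),
      (∀ i, (Δ i).IsTypeA) →
      (∀ i a, B.Exc ((Δ i).C a)) →
      (∀ i j, i ≠ j → ∀ a b,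
        (Δ i).C a ≠ (Δ j).C b ∧ S.inter ((Δ i).C a) ((Δ j).C b) = 0) →
      ∑ i, ((Δ i).n + 1) ≤ s) ∧
    (∀ (k : ℕ) (N : Fin k → S.Div),
      (∀ i, S.Irr (N i) ∧ S.inter (N i) (N i) = -2 ∧ S.inter S.K (N i) = 0 ∧
        B.Exc (N i)) →
      (∀ i j, i ≠ j → N i ≠ N j ∧ S.inter (N i) (N j) = 0) →
      2 * k ≤ s) := by
  classical
  have part1 : ∀ (k : ℕ) (Δ : Fin k → ADEConfig S),
      (∀ i, (Δ i).IsTypeA) →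
      (∀ i a, B.Exc ((Δ i).C a)) →
      (∀ i j, i ≠ j → ∀ a b,
        (Δ i).C a ≠ (Δ j).C b ∧ S.inter ((Δ i).C a) ((Δ j).C b) = 0) →
      ∑ i, ((Δ i).n + 1) ≤ s := by
    intro k Δ hA hexc hdisj
    choose V hV htouch using fun i => config_bound B (Δ i) (hA i) (hexc i)
    have hdisjV : ∀ i ∈ Finset.univ, ∀ j ∈ Finset.univ, i ≠ j →
        Disjoint (V i) (V j) := by
      intro i _ j _ hij
      rw [Finset.disjoint_left]
      intro t hti htj
      obtain ⟨a, ha⟩ := htouch i t hti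
      obtain ⟨b, hb⟩ := htouch j t htj
      obtain ⟨ia, ja, hija, hfa⟩ := curve_edge B (hexc i a) ((Δ i).sq a) ((Δ i).KC a)
      obtain ⟨ib, jb, hijb, hfb⟩ := curve_edge B (hexc j b) ((Δ j).sq b) ((Δ j).KC b)
      have hcross : S.inter ((Δ i).C a) ((Δ j).C b) = 0 := (hdisj i j hij a b).2
      have hdot0 : ∑ t : Fin s,
          ((if t = ia then (1:ℤ) else 0) - (if t = ja then 1 else 0)) *
          ((if t = ib then (1:ℤ) else 0) - (if t = jb then 1 else 0)) = 0 := by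
        have h1 : ∀ t : Fin s,
            ((if t = ia then (1:ℤ) else 0) - (if t = ja then 1 else 0)) *
            ((if t = ib then (1:ℤ) else 0) - (if t = jb then 1 else 0))
            = S.inter ((Δ i).C a) (B.E t) * S.inter ((Δ j).C b) (B.E t) := by
          intro t; rw [hfa t, hfb t]
        rw [Finset.sum_congr rfl fun t _ => h1 t]
        have := B.inter_eq (hexc i a) (hexc j b)
        omega
      obtain ⟨h1, h2, h3, h4⟩ := edge_orth hija hijb hdot0
      have hat : t = ia ∨ t = ja := by
        by_contra hcon
        push_neg at hcon
        rw [hfa t] at ha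
        simp [hcon.1, hcon.2] at ha
      have hbt : t = ib ∨ t = jb := by
        by_contra hcon
        push_neg at hcon
        rw [hfb t] at hb
        simp [hcon.1, hcon.2] at hb
      rcases hat with rfl | rfl <;> rcases hbt with h | h <;> tauto
    calc ∑ i, ((Δ i).n + 1) ≤ ∑ i, (V i).card := Finset.sum_le_sum fun i _ => hV i
      _ = (Finset.univ.biUnion V).card := (Finset.card_biUnion hdisjV).symm
      _ ≤ Fintype.card (Fin s) := Finset.card_le_univ _
      _ = s := Fintype.card_fin s
  constructor
  · exact part1
  · intro k N hN hNN
    set Δ : Fin k → ADEConfig S := fun i =>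
      singleConfig S (N i) (hN i).1 (hN i).2.1 (hN i).2.2.1 with hΔ
    have := part1 k Δ
      (fun i => singleConfig_typeA S (N i) (hN i).1 (hN i).2.1 (hN i).2.2.1)
      (fun i a => (hN i).2.2.2)
      (fun i j hij a b => hNN i j hij)
    have hsum : ∑ i : Fin k, ((Δ i).n + 1) = 2 * k := by
      simp [hΔ, singleConfig, Finset.sum_const, mul_comm]
    omega
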